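/- arXiv:2503.23756 — 2 statements merged into one kernel-verified Lean document; each statement's English description precedes it below -/
import Mathlib

section
/- For any positive definite Hermitian matrix H and any Hermitian matrix A, the matrix H·exp(t·H⁻¹A) is positive definite Hermitian for every real t, and it equals exp(t·A·H⁻¹)·H. -/
set_option maxHeartbeats 1000000

open Matrix
open scoped ComplexOrder

lemma aux_smul_herm {n : Type*} [Fintype n] {c : ℂ} (hc : star c = c)
    {N : Matrix n n ℂ} (hN : N.IsHermitian) : (c • N).IsHermitian := by
  show (c • N)ᴴ = c • N
  rw [conjTranspose_smul, hc, hN.eq]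

lemma aux_posDef_conjTranspose_mul_self {n : Type*} [Fintype n] [DecidableEq n]
    (B : Matrix n n ℂ) (hB : IsUnit B) : (Bᴴ * B).PosDef := by
  exact PosDef.conjTranspose_mul_self B (Matrix.mulVec_injective_iff_isUnit.mpr hB)

lemma aux_exp_sq {n : Type*} [Fintype n] [DecidableEq n] (M : Matrix n n ℂ) :
    NormedSpace.exp M =
      NormedSpace.exp ((1/2 : ℂ) • M) * NormedSpace.exp ((1/2 : ℂ) • M) := by
  have h2 : M = (1/2 : ℂ) • M + (1/2 : ℂ) • M := by
    rw [← add_smul]; norm_num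
  conv_lhs => rw [h2]
  exact Matrix.exp_add_of_commute _ _ (Commute.refl _)

lemma aux_exp_posDef {n : Type*} [Fintype n] [DecidableEq n]
    {M : Matrix n n ℂ} (hM : M.IsHermitian) : (NormedSpace.exp M).PosDef := by
  have hherm : ((1/2 : ℂ) • M).IsHermitian := aux_smul_herm (by norm_num) hM
  have hBh : (NormedSpace.exp ((1/2 : ℂ) • M))ᴴ = NormedSpace.exp ((1/2 : ℂ) • M) :=
    Matrix.IsHermitian.exp hherm
  have hexp : NormedSpace.exp M
      = (NormedSpace.exp ((1/2 : ℂ) • M))ᴴ * NormedSpace.exp ((1/2 : ℂ) • M) := by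
    rw [hBh]; exact aux_exp_sq M
  rw [hexp]
  have hu : IsUnit (NormedSpace.exp ((1/2 : ℂ) • M)) := Matrix.isUnit_exp _
  exact aux_posDef_conjTranspose_mul_self _ hu

/-- For a positive definite Hermitian matrix `H`, a Hermitian matrix `A` and any real `t`,
the matrix `H * exp(t • H⁻¹A)` is positive definite Hermitian, and it equals
`exp(t • A H⁻¹) * H`. -/
theorem posDef_mul_exp {r : ℕ} (H A : Matrix (Fin r) (Fin r) ℂ)
    (hH : H.PosDef) (hA : A.IsHermitian) (t : ℝ) :
    (H * NormedSpace.exp ((t : ℂ) • (H⁻¹ * A))).PosDef ∧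
      H * NormedSpace.exp ((t : ℂ) • (H⁻¹ * A)) =
        NormedSpace.exp ((t : ℂ) • (A * H⁻¹)) * H := by
  have hHu : IsUnit H := hH.isUnit
  have hHinv : H * H⁻¹ = 1 := Matrix.mul_nonsing_inv H (isUnit_iff_isUnit_det H |>.mp hHu)
  have hinvH : H⁻¹ * H = 1 := Matrix.nonsing_inv_mul H (isUnit_iff_isUnit_det H |>.mp hHu)
  -- the square root of H
  set S := (open scoped MatrixOrder in CFC.sqrt H) with hSdef
  have hS : S.PosSemidef := (open scoped MatrixOrder in (CFC.sqrt_nonneg H).posSemidef)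
  have hSherm : S.IsHermitian := hS.1
  have hSS : S * S = H := (open scoped MatrixOrder in CFC.sqrt_mul_sqrt_self H hH.posSemidef.nonneg)
  have hSu : IsUnit S := by
    rw [Matrix.isUnit_iff_isUnit_det]
    have hdet : S.det * S.det = H.det := by rw [← det_mul, hSS]
    apply isUnit_of_mul_isUnit_left (y := S.det)
    rw [hdet]
    exact (isUnit_iff_isUnit_det H).mp hHu
  have hSinv : S * S⁻¹ = 1 := Matrix.mul_nonsing_inv S (isUnit_iff_isUnit_det S |>.mp hSu)
  have hinvS : S⁻¹ * S = 1 := Matrix.nonsing_inv_mul S (isUnit_iff_isUnit_det S |>.mp hSu)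
  have hSinvherm : (S⁻¹).IsHermitian := hSherm.inv
  -- the conjugated Hermitian matrix
  set M : Matrix (Fin r) (Fin r) ℂ := (t : ℂ) • (S⁻¹ * A * S⁻¹) with hMdef
  have hMherm : M.IsHermitian := by
    refine aux_smul_herm (by simp) ?_
    show (S⁻¹ * A * S⁻¹)ᴴ = S⁻¹ * A * S⁻¹
    rw [conjTranspose_mul, conjTranspose_mul, hSinvherm.eq, hA.eq, mul_assoc]
  have hHinv' : H⁻¹ = S⁻¹ * S⁻¹ := by rw [← hSS, Matrix.mul_inv_rev]
  have hkey : (t : ℂ) • (H⁻¹ * A) = S⁻¹ * M * S := by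
    rw [hMdef, Matrix.mul_smul, Matrix.smul_mul]
    congr 1
    rw [hHinv']
    simp only [Matrix.mul_assoc, hinvS, Matrix.mul_one]
  have hexpconj : NormedSpace.exp ((t : ℂ) • (H⁻¹ * A))
      = S⁻¹ * NormedSpace.exp M * S := by
    rw [hkey, Matrix.exp_conj' S M hSu]
  have hmain : H * NormedSpace.exp ((t : ℂ) • (H⁻¹ * A)) = S * NormedSpace.exp M * S := by
    rw [hexpconj, ← hSS]
    simp only [← Matrix.mul_assoc]
    rw [Matrix.mul_assoc S S S⁻¹, hSinv, Matrix.mul_one]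
  constructor
  · rw [hmain]
    have hherm2 : ((1/2 : ℂ) • M).IsHermitian := aux_smul_herm (by norm_num) hMherm
    set B := NormedSpace.exp ((1/2 : ℂ) • M) with hBdef
    have hBh : Bᴴ = B := Matrix.IsHermitian.exp hherm2
    have hexp2 : NormedSpace.exp M = Bᴴ * B := by rw [hBh]; exact aux_exp_sq M
    rw [hexp2]
    have hre : S * (Bᴴ * B) * S = (B * S)ᴴ * (B * S) := by
      rw [conjTranspose_mul, hBh, hSherm.eq]
      simp only [Matrix.mul_assoc]
    rw [hre]
    have hBu : IsUnit B := Matrix.isUnit_exp _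
    have hBSu : IsUnit (B * S) := hBu.mul hSu
    exact aux_posDef_conjTranspose_mul_self _ hBSu
  · have hkey2 : (t : ℂ) • (A * H⁻¹) = H * ((t : ℂ) • (H⁻¹ * A)) * H⁻¹ := by
      rw [Matrix.mul_smul, Matrix.smul_mul]
      congr 1
      rw [← Matrix.mul_assoc, hHinv, Matrix.one_mul]
    rw [hkey2, Matrix.exp_conj H _ hHu]
    rw [Matrix.mul_assoc _ H⁻¹ H, hinvH, Matrix.mul_one]
end

section
/- For any two positive definite Hermitian matrices P and Q, there exists a unique Hermitian matrix A such that exp(P⁻¹A) = P⁻¹Q. -/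
open Matrix
open scoped ComplexOrder

lemma posDef_conjTranspose_mul_mul_aux {n : Type*} [Fintype n] [DecidableEq n]
    {M : Matrix n n ℂ} (B : Matrix n n ℂ) (hM : M.PosDef) (hB : IsUnit B) :
    (Bᴴ * M * B).PosDef := by
  refine Matrix.PosDef.of_dotProduct_mulVec_pos (Matrix.isHermitian_conjTranspose_mul_mul B hM.1)
    fun x hx => ?_
  have hBx : B *ᵥ x ≠ 0 :=
    (Matrix.mulVec_injective_iff_isUnit.mpr hB |>.ne_iff' (Matrix.mulVec_zero B)).2 hx
  simpa only [star_mulVec, dotProduct_mulVec, vecMul_vecMul] using hM.dotProduct_mulVec_pos hBx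

lemma matrix_exp_real_eq_complex {n : Type*} [Fintype n] [DecidableEq n]
    (A : Matrix n n ℂ) : NormedSpace.exp A = NormedSpace.exp A :=
  rfl

/-- The logarithm of a Hermitian matrix, via the continuous functional calculus
(with the product topology on matrices). -/
noncomputable def matLog {n : Type*} [Fintype n] [DecidableEq n] (R : Matrix n n ℂ) :
    Matrix n n ℂ := cfc Real.log R

lemma matrix_exp_log {n : Type*} [Fintype n] [DecidableEq n]
    {R : Matrix n n ℂ} (hR : R.PosDef) :
    NormedSpace.exp (matLog R) = R := by
  open scoped Matrix.Norms.L2Operator MatrixOrder in exact CFC.exp_log R hR.isStrictlyPositive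

lemma matrix_log_exp {n : Type*} [Fintype n] [DecidableEq n]
    {S : Matrix n n ℂ} (hS : S.IsHermitian) :
    matLog (NormedSpace.exp S) = S := by
  open scoped Matrix.Norms.L2Operator in exact CFC.log_exp S (hS : IsSelfAdjoint S)

/-- For positive definite Hermitian matrices `P` and `Q`, there exists a unique Hermitian
matrix `A` such that `exp(P⁻¹A) = P⁻¹Q`. -/
theorem existsUnique_hermitian_exp_eq {r : ℕ} (P Q : Matrix (Fin r) (Fin r) ℂ)
    (hP : P.PosDef) (hQ : Q.PosDef) :
    ∃! A : Matrix (Fin r) (Fin r) ℂ,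
      A.IsHermitian ∧ NormedSpace.exp (P⁻¹ * A) = P⁻¹ * Q := by
  classical
  open scoped MatrixOrder in
  set T := CFC.sqrt P with hTdef
  have hTherm : T.IsHermitian := (CFC.sqrt_nonneg P).posSemidef.1
  have hTT : T * T = P := CFC.sqrt_mul_sqrt_self P hP.posSemidef.nonneg
  have hTdetunit : IsUnit T.det := by
    have h : T.det * T.det = P.det := by rw [← Matrix.det_mul, hTT]
    have hPdet : P.det ≠ 0 := hP.det_pos.ne'
    have : T.det ≠ 0 := fun h0 => hPdet (by rw [← h, h0, zero_mul])
    exact this.isUnit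
  have hTunit : IsUnit T := (Matrix.isUnit_iff_isUnit_det T).2 hTdetunit
  have hTinvunit : IsUnit T⁻¹ := Matrix.isUnit_nonsing_inv_iff.2 hTunit
  have hTl : T⁻¹ * T = 1 := Matrix.nonsing_inv_mul T hTdetunit
  have hTr : T * T⁻¹ = 1 := Matrix.mul_nonsing_inv T hTdetunit
  have hTl' : ∀ X : Matrix (Fin r) (Fin r) ℂ, T⁻¹ * (T * X) = X := fun X => by
    rw [← Matrix.mul_assoc, hTl, Matrix.one_mul]
  have hTr' : ∀ X : Matrix (Fin r) (Fin r) ℂ, T * (T⁻¹ * X) = X := fun X => by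
    rw [← Matrix.mul_assoc, hTr, Matrix.one_mul]
  have hTinvherm : (T⁻¹).IsHermitian := hTherm.inv
  have hPinv : P⁻¹ = T⁻¹ * T⁻¹ := by rw [← hTT, Matrix.mul_inv_rev]
  have hR : (T⁻¹ * Q * T⁻¹).PosDef := by
    have := posDef_conjTranspose_mul_mul_aux T⁻¹ hQ hTinvunit
    rwa [hTinvherm.eq] at this
  set L := matLog (T⁻¹ * Q * T⁻¹) with hLdef
  have hLsa : IsSelfAdjoint L := cfc_predicate Real.log _
  have hLherm : L.IsHermitian := hLsa
  have hexpL : NormedSpace.exp L = T⁻¹ * Q * T⁻¹ := by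
    rw [← matrix_exp_real_eq_complex]
    exact matrix_exp_log hR
  refine ⟨T * L * T, ⟨?_, ?_⟩, ?_⟩
  · show (T * L * T)ᴴ = T * L * T
    rw [Matrix.conjTranspose_mul, Matrix.conjTranspose_mul, hTherm.eq, hLherm.eq,
      Matrix.mul_assoc]
  · have e1 : P⁻¹ * (T * L * T) = T⁻¹ * L * T := by
      rw [hPinv]
      simp only [Matrix.mul_assoc, hTl']
    rw [e1, Matrix.exp_conj' T L hTunit, hexpL, hPinv]
    simp only [Matrix.mul_assoc, hTl, Matrix.mul_one]
  · rintro A ⟨hAherm, hAeq⟩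
    have e2 : P⁻¹ * A = T⁻¹ * (T⁻¹ * A * T⁻¹) * T := by
      rw [hPinv]
      simp only [Matrix.mul_assoc, hTl, Matrix.mul_one]
    rw [e2, Matrix.exp_conj' T (T⁻¹ * A * T⁻¹) hTunit] at hAeq
    have hSherm : (T⁻¹ * A * T⁻¹).IsHermitian := by
      show (T⁻¹ * A * T⁻¹)ᴴ = T⁻¹ * A * T⁻¹
      rw [Matrix.conjTranspose_mul, Matrix.conjTranspose_mul, hTinvherm.eq, hAherm.eq,
        Matrix.mul_assoc]
    have h2 : NormedSpace.exp (T⁻¹ * A * T⁻¹) = T⁻¹ * Q * T⁻¹ := by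
      have h3 := congrArg (fun X => T * X * T⁻¹) hAeq
      simp only [hPinv, Matrix.mul_assoc, hTr', hTr, Matrix.mul_one] at h3
      rw [Matrix.mul_assoc T⁻¹ A T⁻¹, Matrix.mul_assoc T⁻¹ Q T⁻¹]
      exact h3
    have hSL : T⁻¹ * A * T⁻¹ = L := by
      have h4 := matrix_log_exp hSherm
      rw [matrix_exp_real_eq_complex, h2] at h4
      rw [← h4, hLdef]
    have : A = T * (T⁻¹ * A * T⁻¹) * T := by
      simp only [Matrix.mul_assoc, hTl, Matrix.mul_one, hTr']
    rw [this, hSL]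
end
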